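/- Let ξ_{n,i} be defined by ξ_{0,0} = 1, ξ_{0,i} = 0 for i ≠ 0, and ξ_{n+1,i} = (1+2n−6i)·ξ_{n,i} + (n−2i+2)·ξ_{n,i−1} − 4(i+1)·ξ_{n,i+1}, and set ξ_n(x) = Σ_{i=0}^{⌊n/2⌋} ξ_{n,i} x^i. In the ring of formal power series in z with coefficients in ℚ[x], the identity (Σ_{n≥0} ξ_n(x) zⁿ/n!) · (C(z) − S(z)) = 1 holds, where C(z) = Σ_{m≥0} (−1)^m (1+x)^m z^{2m}/(2m)! and S(z) = Σ_{m≥0} (−1)^m (1+x)^m z^{2m+1}/(2m+1)! (the formal expansions of cos(z√(1+x)) and sin(z√(1+x))/√(1+x)). -/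

import Mathlib

open Finset

/-- Signed permutations of order `n` (the hyperoctahedral group), modeled as a
permutation of `Fin n` together with a sign for each position. -/
abbrev BSigned (n : ℕ) := Equiv.Perm (Fin n) × (Fin n → Bool)

/-- The word of a signed permutation: `bword σ j = σ(j)` for `1 ≤ j ≤ n`,
with the convention `σ(0) = 0`. -/
def bword {n : ℕ} (σ : BSigned n) (j : ℕ) : ℤ :=
  if h : 1 ≤ j ∧ j ≤ n then
    (if σ.2 ⟨j - 1, by omega⟩ then -1 else 1) * ((σ.1 ⟨j - 1, by omega⟩ : ℕ) + 1)
  else 0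

/-- The number of alternating descents of a signed permutation: the number of
`0 ≤ j ≤ n-1` such that `j` is even and `σ(j) < σ(j+1)`, or `j` is odd and `σ(j) > σ(j+1)`. -/
def altdesB {n : ℕ} (σ : BSigned n) : ℕ :=
  ((Finset.range n).filter (fun j => (Even j ∧ bword σ j < bword σ (j + 1)) ∨
      (Odd j ∧ bword σ (j + 1) < bword σ j))).card

/-- The type B alternating Eulerian number `B̂(n,k)`. -/
def Bhat (n k : ℕ) : ℕ :=
  (Finset.univ.filter (fun σ : BSigned n => altdesB σ = k)).card

/-- The type B alternating Eulerian polynomial `B̂_n(x)` as a real function. -/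
noncomputable def Bpoly (n : ℕ) (x : ℝ) : ℝ :=
  ∑ σ : BSigned n, x ^ altdesB σ

/-- The word of a permutation of `{1,…,n}`: `aword π j = π(j)` for `1 ≤ j ≤ n`,
with the convention `π(0) = 0`. -/
def aword {n : ℕ} (π : Equiv.Perm (Fin n)) (j : ℕ) : ℕ :=
  if h : 1 ≤ j ∧ j ≤ n then (π ⟨j - 1, by omega⟩ : ℕ) + 1 else 0

/-- The number of alternating descents of a permutation: the number of
`1 ≤ j ≤ n-1` such that `j` is odd and `π(j) > π(j+1)`, or `j` is even and `π(j) < π(j+1)`. -/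
def altdesA {n : ℕ} (π : Equiv.Perm (Fin n)) : ℕ :=
  ((Finset.Icc 1 (n - 1)).filter (fun j => (Odd j ∧ aword π (j + 1) < aword π j) ∨
      (Even j ∧ aword π j < aword π (j + 1)))).card

/-- The type A alternating Eulerian number `Â(n,k)`. -/
def Ahat (n k : ℕ) : ℕ :=
  (Finset.univ.filter (fun π : Equiv.Perm (Fin n) => altdesA π = k)).card

/-- The type A alternating Eulerian polynomial `Â_n(x)` as a real function. -/
noncomputable def Apoly (n : ℕ) (x : ℝ) : ℝ :=
  ∑ π : Equiv.Perm (Fin n), x ^ altdesA π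

/-- The number of left peaks of a permutation: indices `1 ≤ i ≤ n-1` with
`π(i-1) < π(i) > π(i+1)`, where `π(0) = 0`. -/
def lpk {n : ℕ} (π : Equiv.Perm (Fin n)) : ℕ :=
  ((Finset.Icc 1 (n - 1)).filter (fun i =>
      aword π (i - 1) < aword π i ∧ aword π (i + 1) < aword π i)).card

/-- `M n k` is the number of permutations of `{1,…,n}` with exactly `k` left peaks. -/
def M (n k : ℕ) : ℕ :=
  (Finset.univ.filter (fun π : Equiv.Perm (Fin n) => lpk π = k)).card

/-- The derivative polynomials for secant: `Q 0 = 1`,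
`Q (n+1) = x Q n + (1+x²) (Q n)'`. -/
noncomputable def Q : ℕ → Polynomial ℝ
  | 0 => 1
  | n + 1 => Polynomial.X * Q n + (1 + Polynomial.X ^ 2) * Polynomial.derivative (Q n)

/-- The coefficients `ξ_{n,i}` (terms with negative index vanish). -/
def xi : ℕ → ℤ → ℤ
  | 0, i => if i = 0 then 1 else 0
  | n + 1, i => (1 + 2 * (n : ℤ) - 6 * i) * xi n i + ((n : ℤ) - 2 * i + 2) * xi n (i - 1)
      - 4 * (i + 1) * xi n (i + 1)

/-- The polynomial `ξ_n(x) = Σ_{i=0}^{⌊n/2⌋} ξ_{n,i} x^i` as a real function. -/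
noncomputable def xiPoly (n : ℕ) (x : ℝ) : ℝ :=
  ∑ i ∈ Finset.range (n / 2 + 1), (xi n i : ℝ) * x ^ i

/-- A snake: a signed permutation with `σ(0) < σ(1) > σ(2) < σ(3) > ⋯`. -/
def IsSnake {n : ℕ} (σ : BSigned n) : Prop :=
  ∀ i : ℕ, (2 * i + 1 ≤ n → bword σ (2 * i) < bword σ (2 * i + 1)) ∧
    (2 * i + 2 ≤ n → bword σ (2 * i + 2) < bword σ (2 * i + 1))

/-- The Springer number `s_n`: the number of snakes of order `n`. -/
noncomputable def springer (n : ℕ) : ℕ := Nat.card {σ : BSigned n // IsSnake σ}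

/-- An alternating (down-up) permutation: `π(1) > π(2) < π(3) > ⋯`. -/
def IsAlternating {m : ℕ} (π : Equiv.Perm (Fin m)) : Prop :=
  ∀ j : ℕ, 1 ≤ j → j + 1 ≤ m →
    (Odd j → aword π (j + 1) < aword π j) ∧ (Even j → aword π j < aword π (j + 1))

/-- The secant number `E_{2n}`: the number of alternating permutations of `{1,…,2n}`. -/
noncomputable def secantNumber (n : ℕ) : ℕ :=
  Nat.card {π : Equiv.Perm (Fin (2 * n)) // IsAlternating π}

/-- The polynomial `ξ_n(x)` over `ℚ`. -/
noncomputable def xiPolyQ (n : ℕ) : Polynomial ℚ :=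
  ∑ i ∈ Finset.range (n / 2 + 1), Polynomial.C ((xi n i : ℚ)) * Polynomial.X ^ i

/-- The formal expansion of `cos(z√(1+x))` as a power series in `z` over `ℚ[x]`:
`Σ_{m≥0} (−1)^m (1+x)^m z^{2m}/(2m)!`. -/
noncomputable def cosSqrtSeries : PowerSeries (Polynomial ℚ) :=
  PowerSeries.mk fun j =>
    if Even j then
      Polynomial.C ((-1) ^ (j / 2) * ((j.factorial : ℚ)⁻¹)) * (1 + Polynomial.X) ^ (j / 2)
    else 0

/-- The formal expansion of `sin(z√(1+x))/√(1+x)` as a power series in `z` over `ℚ[x]`: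
`Σ_{m≥0} (−1)^m (1+x)^m z^{2m+1}/(2m+1)!`. -/
noncomputable def sinSqrtSeries : PowerSeries (Polynomial ℚ) :=
  PowerSeries.mk fun j =>
    if ¬ Even j then
      Polynomial.C ((-1) ^ ((j - 1) / 2) * ((j.factorial : ℚ)⁻¹)) *
        (1 + Polynomial.X) ^ ((j - 1) / 2)
    else 0

open Polynomial in
lemma xi_neg : ∀ (n : ℕ) (i : ℤ), i < 0 → xi n i = 0 := by
  intro n
  induction n with
  | zero => intro i hi; simp [xi]; omega
  | succ n ih =>
    intro i hi
    rw [xi, ih i hi, ih (i-1) (by omega)]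
    rcases lt_or_eq_of_le (by omega : i + 1 ≤ 0) with h | h
    · rw [ih (i+1) h]; ring
    · rw [h]; ring

lemma xi_gt : ∀ (n : ℕ) (i : ℤ), (n : ℤ) < 2 * i → xi n i = 0 := by
  intro n
  induction n with
  | zero => intro i hi; simp [xi]; omega
  | succ n ih =>
    intro i hi
    push_cast at hi ⊢
    rw [xi, ih i (by omega), ih (i+1) (by omega)]
    rcases lt_or_ge (n : ℤ) (2*(i-1)) with h | h
    · rw [ih (i-1) h]; ring
    · have : (n : ℤ) - 2*i + 2 = 0 := by omega
      rw [this]; ring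

open Polynomial in
lemma coeff_xiPolyQ (n : ℕ) (i : ℕ) : (xiPolyQ n).coeff i = (xi n i : ℚ) := by
  rw [xiPolyQ, finset_sum_coeff]
  simp only [coeff_C_mul, coeff_X_pow, mul_ite, mul_one, mul_zero]
  rw [Finset.sum_ite_eq (Finset.range (n/2+1)) i]
  by_cases h : i ∈ Finset.range (n/2+1)
  · simp [h]
  · simp only [h, if_false]
    rw [xi_gt n i (by simp at h; omega)]
    simp

open Polynomial in
lemma lemA (n : ℕ) : xiPolyQ (n+1) =
    C ((1:ℚ)+2*n) * xiPolyQ n + C (n:ℚ) * (xiPolyQ n * X^1)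
      - C 2 * (derivative (xiPolyQ n) * X^2) - C 6 * (derivative (xiPolyQ n) * X^1)
      - C 4 * derivative (xiPolyQ n) := by
  ext i
  simp only [coeff_add, coeff_sub, coeff_C_mul, coeff_mul_X_pow', coeff_derivative,
    coeff_xiPolyQ]
  rcases i with _ | _ | i
  · simp only [Nat.zero_eq, show ¬(1 ≤ 0) by omega, show ¬(2 ≤ 0) by omega, if_false]
    rw [show ((0:ℕ):ℤ) = 0 by norm_num, xi, show (0:ℤ)-1 = (-1:ℤ) by norm_num,
      xi_neg n (-1) (by omega)]
    push_cast
    ring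
  · simp only [show (1 ≤ 1) by omega, show ¬(2 ≤ 1) by omega, if_true, if_false]
    norm_num
    rw [xi]
    norm_num
    ring
  · have h2 : (2:ℕ) ≤ i + 2 := by omega
    have h1 : (1:ℕ) ≤ i + 2 := by omega
    simp only [h1, h2, if_true, show i+2-1 = i+1 by omega, show i+2-2 = i by omega]
    rw [show ((i+2:ℕ):ℤ) = (i:ℤ)+2 by push_cast; ring, xi]
    push_cast
    ring

/-- The coefficients of `cosSqrtSeries - sinSqrtSeries`. -/
noncomputable def gcP (j : ℕ) : Polynomial ℚ :=
  PowerSeries.coeff j (cosSqrtSeries - sinSqrtSeries)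

/-- The coefficients of the left series. -/
noncomputable def ccP (k : ℕ) : Polynomial ℚ :=
  Polynomial.C ((k.factorial : ℚ)⁻¹) * xiPolyQ k

open Polynomial in
lemma gcP_even (m : ℕ) : gcP (2*m) =
    C ((-1) ^ m * (((2*m).factorial : ℚ)⁻¹)) * (1 + X) ^ m := by
  simp [gcP, cosSqrtSeries, sinSqrtSeries, Nat.even_iff, Nat.mul_div_cancel_left]

open Polynomial in
lemma gcP_odd (m : ℕ) : gcP (2*m+1) =
    -(C ((-1) ^ m * (((2*m+1).factorial : ℚ)⁻¹)) * (1 + X) ^ m) := by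
  have h : ¬ Even (2*m+1) := by simp [Nat.even_iff, Nat.add_mod]
  simp [gcP, cosSqrtSeries, sinSqrtSeries, h, Nat.mul_div_cancel_left]

open Polynomial in
lemma gB (l : ℕ) : ((l : Polynomial ℚ)+1) * gcP (l+1) =
    -gcP l + (X+2) * ((l : Polynomial ℚ) * gcP l)
      - (2*(X+1)*(X+2)) * derivative (gcP l) := by
  rcases Nat.even_or_odd l with ⟨m, hm⟩ | ⟨m, hm⟩
  · subst hm
    rw [show m + m = 2*m by ring] at *
    have hab : ((2*m+1 : ℕ):ℚ) * (((2*m+1).factorial : ℚ)⁻¹) = ((2*m).factorial : ℚ)⁻¹ := by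
      rw [Nat.factorial_succ]
      push_cast
      field_simp
    have hC : ((2*m+1 : ℕ) : Polynomial ℚ) * C (((2*m+1).factorial : ℚ)⁻¹)
        = C (((2*m).factorial : ℚ)⁻¹) := by
      rw [show ((2*m+1:ℕ) : Polynomial ℚ) = C ((2*m+1:ℕ):ℚ) from (map_natCast C _).symm,
        ← C_mul, hab]
    rw [gcP_even, gcP_odd]
    simp only [derivative_mul, derivative_C, derivative_pow, derivative_add, derivative_one,
      derivative_X, zero_mul, zero_add, mul_one, C_mul, map_pow, map_neg, map_one]
    rcases m with _ | m
    · norm_num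
    · push_cast [map_natCast, map_add, map_one] at hC ⊢
      linear_combination ((-1:Polynomial ℚ))^m * (1+X)^(m+1) * hC
  · subst hm
    have hab : ((2*(m+1) : ℕ):ℚ) * (((2*(m+1)).factorial : ℚ)⁻¹)
        = ((2*m+1).factorial : ℚ)⁻¹ := by
      rw [show (2*(m+1)) = (2*m+1)+1 by ring, Nat.factorial_succ]
      push_cast
      field_simp
    have hC : ((2*(m+1) : ℕ) : Polynomial ℚ) * C (((2*(m+1)).factorial : ℚ)⁻¹)
        = C (((2*m+1).factorial : ℚ)⁻¹) := by
      rw [show ((2*(m+1):ℕ) : Polynomial ℚ) = C ((2*(m+1):ℕ):ℚ) from (map_natCast C _).symm,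
        ← C_mul, hab]
    rw [show 2*m+1+1 = 2*(m+1) by ring, gcP_even, gcP_odd]
    simp only [derivative_mul, derivative_C, derivative_pow, derivative_add, derivative_one,
      derivative_X, zero_mul, zero_add, mul_one, C_mul, map_pow, map_neg, map_one]
    rcases m with _ | m
    · push_cast [map_natCast, map_add, map_one, Polynomial.C_0] at hC ⊢
      linear_combination (-(1+X)) * hC
    · push_cast [map_natCast, map_add, map_one] at hC ⊢
      linear_combination ((-1:Polynomial ℚ))^m * (1+X)^(m+2) * hC

open Polynomial in
lemma cA (k : ℕ) : ((k : Polynomial ℚ)+1) * ccP (k+1) =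
    ccP k + (X+2) * ((k : Polynomial ℚ) * ccP k)
      - (2*(X+1)*(X+2)) * derivative (ccP k) := by
  have hab : ((k+1 : ℕ):ℚ) * (((k+1).factorial : ℚ)⁻¹) = ((k.factorial : ℚ)⁻¹) := by
    rw [Nat.factorial_succ]
    push_cast
    field_simp
  have hC : ((k+1 : ℕ) : Polynomial ℚ) * C (((k+1).factorial : ℚ)⁻¹)
      = C ((k.factorial : ℚ)⁻¹) := by
    rw [show ((k+1:ℕ) : Polynomial ℚ) = C ((k+1:ℕ):ℚ) from (map_natCast C _).symm,
      ← C_mul, hab]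
  simp only [ccP]
  rw [lemA]
  simp only [derivative_mul, derivative_C, zero_mul, zero_add]
  push_cast [map_natCast, map_add, map_one, map_mul, map_ofNat] at hC ⊢
  linear_combination ((1+2*(k:Polynomial ℚ)) * xiPolyQ k + (k:Polynomial ℚ) * (xiPolyQ k * X)
    - 2*(derivative (xiPolyQ k)*X^2) - 6*(derivative (xiPolyQ k)*X)
    - 4*derivative (xiPolyQ k)) * hC

/-- Coefficients of the product series. -/
noncomputable def hhP (n : ℕ) : Polynomial ℚ :=
  ∑ p ∈ Finset.HasAntidiagonal.antidiagonal n, ccP p.1 * gcP p.2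

open Polynomial in
lemma key (n : ℕ) : ((n : Polynomial ℚ)+1) * hhP (n+1) =
    (X+2) * ((n : Polynomial ℚ) * hhP n) - (2*(X+1)*(X+2)) * derivative (hhP n) := by
  have expand : ∀ p ∈ antidiagonal n,
      (((p.1 : Polynomial ℚ))+1) * ccP (p.1+1) * gcP p.2
        + ccP p.1 * ((((p.2 : Polynomial ℚ))+1) * gcP (p.2+1))
      = (X+2) * ((n : Polynomial ℚ) * (ccP p.1 * gcP p.2))
        - (2*(X+1)*(X+2)) * derivative (ccP p.1 * gcP p.2) := by
    intro p hp
    have hn : p.1 + p.2 = n := Finset.HasAntidiagonal.mem_antidiagonal.mp hp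
    have hcast : ((n:ℕ) : Polynomial ℚ) = (p.1 : Polynomial ℚ) + (p.2 : Polynomial ℚ) := by
      rw [← hn]; push_cast; ring
    rw [hcast, derivative_mul]
    linear_combination gcP p.2 * cA p.1 + ccP p.1 * gB p.2
  calc ((n : Polynomial ℚ)+1) * hhP (n+1)
      = ∑ p ∈ antidiagonal (n+1),
          ((p.1 : Polynomial ℚ) * (ccP p.1 * gcP p.2)
            + (p.2 : Polynomial ℚ) * (ccP p.1 * gcP p.2)) := by
        rw [hhP, Finset.mul_sum]
        refine Finset.sum_congr rfl fun p hp => ?_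
        have hn : p.1 + p.2 = n + 1 := Finset.HasAntidiagonal.mem_antidiagonal.mp hp
        have hcast : ((n:ℕ) : Polynomial ℚ) + 1
            = (p.1 : Polynomial ℚ) + (p.2 : Polynomial ℚ) := by
          have : ((n+1:ℕ) : Polynomial ℚ) = ((p.1 + p.2 : ℕ) : Polynomial ℚ) := by rw [hn]
          push_cast at this
          exact this
        rw [hcast]; ring
    _ = (∑ p ∈ antidiagonal (n+1), (p.1 : Polynomial ℚ) * (ccP p.1 * gcP p.2))
        + ∑ p ∈ antidiagonal (n+1), (p.2 : Polynomial ℚ) * (ccP p.1 * gcP p.2) := by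
        rw [Finset.sum_add_distrib]
    _ = (∑ p ∈ antidiagonal n, ((p.1+1 : ℕ) : Polynomial ℚ) * (ccP (p.1+1) * gcP p.2))
        + ∑ p ∈ antidiagonal n, ((p.2+1 : ℕ) : Polynomial ℚ) * (ccP p.1 * gcP (p.2+1)) := by
        rw [Finset.Nat.sum_antidiagonal_succ
          (f := fun p => (p.1 : Polynomial ℚ) * (ccP p.1 * gcP p.2)),
          Finset.Nat.sum_antidiagonal_succ'
          (f := fun p => (p.2 : Polynomial ℚ) * (ccP p.1 * gcP p.2))]
        norm_num
    _ = ∑ p ∈ antidiagonal n,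
          ((((p.1 : Polynomial ℚ))+1) * ccP (p.1+1) * gcP p.2
            + ccP p.1 * ((((p.2 : Polynomial ℚ))+1) * gcP (p.2+1))) := by
        rw [← Finset.sum_add_distrib]
        refine Finset.sum_congr rfl fun p hp => ?_
        push_cast
        ring
    _ = ∑ p ∈ antidiagonal n,
          ((X+2) * ((n : Polynomial ℚ) * (ccP p.1 * gcP p.2))
            - (2*(X+1)*(X+2)) * derivative (ccP p.1 * gcP p.2)) :=
        Finset.sum_congr rfl expand
    _ = (X+2) * ((n : Polynomial ℚ) * hhP n) - (2*(X+1)*(X+2)) * derivative (hhP n) := by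
        rw [hhP, map_sum, Finset.sum_sub_distrib, ← Finset.mul_sum, ← Finset.mul_sum,
          ← Finset.mul_sum]

lemma hhP_zero : hhP 0 = 1 := by
  have h1 : xiPolyQ 0 = 1 := by
    simp [xiPolyQ, xi]
  have h2 : gcP 0 = 1 := by
    have := gcP_even 0
    simpa using this
  simp [hhP, ccP, h1, h2]

lemma hhP_succ : ∀ n : ℕ, hhP (n+1) = 0 := by
  intro n
  induction n with
  | zero =>
    have h := key 0
    rw [hhP_zero] at h
    simpa using h
  | succ n ih =>
    have h := key (n+1)
    rw [ih] at h
    simp only [mul_zero, map_zero, sub_zero, zero_mul] at h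
    exact (mul_eq_zero.mp h).resolve_left (Nat.cast_add_one_ne_zero (n+1))

lemma coeff_prod_eq_hhP (n : ℕ) :
    PowerSeries.coeff n
      ((PowerSeries.mk fun n => Polynomial.C ((n.factorial : ℚ)⁻¹) * xiPolyQ n) *
        (cosSqrtSeries - sinSqrtSeries)) = hhP n := by
  rw [PowerSeries.coeff_mul, hhP]
  refine Finset.sum_congr rfl fun p _ => ?_
  rw [PowerSeries.coeff_mk]
  rfl

/-- the exponential generating function identity
`(Σ_{n≥0} ξ_n(x) zⁿ/n!) · (C(z) − S(z)) = 1` in formal power series in `z` over `ℚ[x]`. -/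
theorem stmt15 :
    (PowerSeries.mk fun n => Polynomial.C ((n.factorial : ℚ)⁻¹) * xiPolyQ n) *
      (cosSqrtSeries - sinSqrtSeries) = 1 := by
  ext n
  rw [coeff_prod_eq_hhP]
  rcases n with _ | n
  · rw [hhP_zero]
    simp
  · rw [hhP_succ]
    simp [PowerSeries.coeff_one]
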